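/- ER-WL is exactly as powerful as WL: augmenting a graph with an explicit edge-representation node for every edge (connected to the edge's two endpoints, carrying a fresh label α) neither increases nor decreases the ability of the WL test to distinguish non-isomorphic graphs. -/

import Mathlib

/-- The type of Weisfeiler-Leman colors after `t` iterations, starting from features in `F`.
The injective hash function is modeled by pairing: a color at iteration `t+1` is the pair of
the previous color and the multiset of the previous colors of the neighbors. -/
def WLColor (F : Type*) : ℕ → Type _
  | 0 => F
  | t + 1 => WLColor F t × Multiset (WLColor F t)

/-- The WL coloring of a graph `G` with node features `X` at iteration `t`:
`c_v^(0) = hash X_v` and `c_v^(t) = hash (c_v^(t-1), {{c_w^(t-1) | w ∈ N(v)}})`,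
with the injective hash realized by pairing. -/
def wl {V F : Type*} [Fintype V] (G : SimpleGraph V) [DecidableRel G.Adj] (X : V → F) :
    (t : ℕ) → V → WLColor F t
  | 0 => X
  | t + 1 => fun v => (wl G X t v, (G.neighborFinset v).val.map (wl G X t))


/-- A simple graph built from a boolean relation (symmetrized, loops removed). -/
def boolGraph {α : Type*} (r : α → α → Bool) : SimpleGraph α :=
  SimpleGraph.fromRel fun a b => r a b = true

instance {α : Type*} [DecidableEq α] (r : α → α → Bool) : DecidableRel (boolGraph r).Adj :=
  fun a b => decidable_of_iff _ (SimpleGraph.fromRel_adj _ a b).symm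

variable {V F : Type*}

/-- The relation underlying the edge-representation augmentation `ER(G)`: original adjacency
between original vertices, and each edge-node is adjacent to its two endpoints. -/
def erRel [DecidableEq V] (G : SimpleGraph V) [DecidableRel G.Adj] :
    (V ⊕ G.edgeSet) → (V ⊕ G.edgeSet) → Bool
  | Sum.inl u, Sum.inl v => decide (G.Adj u v)
  | Sum.inl v, Sum.inr e => decide (v ∈ (e : Sym2 V))
  | Sum.inr e, Sum.inl v => decide (v ∈ (e : Sym2 V))
  | Sum.inr _, Sum.inr _ => false

/-- The edge-representation augmented graph `ER(G)`, with one new node per edge, connected to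
the edge's two endpoints. -/
def ERGraph [DecidableEq V] (G : SimpleGraph V) [DecidableRel G.Adj] :
    SimpleGraph (V ⊕ G.edgeSet) :=
  boolGraph (erRel G)

instance [DecidableEq V] (G : SimpleGraph V) [DecidableRel G.Adj] :
    DecidableRel (ERGraph G).Adj :=
  inferInstanceAs (DecidableRel (boolGraph (erRel G)).Adj)

/-- The features of `ER(G)`: original features on original vertices, a fresh label `α = none`
on the edge nodes. -/
def erX [DecidableEq V] (G : SimpleGraph V) [DecidableRel G.Adj] (X : V → F) :
    (V ⊕ G.edgeSet) → Option F :=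
  Sum.elim (fun v => some (X v)) (fun _ => none)

set_option linter.unusedSectionVars false
section Aux

variable [Fintype V] [DecidableEq V] (G : SimpleGraph V) [DecidableRel G.Adj]

lemma er_adj_inl_inl (u v : V) : (ERGraph G).Adj (Sum.inl u) (Sum.inl v) ↔ G.Adj u v := by
  rw [ERGraph, boolGraph, SimpleGraph.fromRel_adj]
  simp only [erRel, decide_eq_true_eq, ne_eq, Sum.inl.injEq]
  constructor
  · rintro ⟨hne, h | h⟩
    · exact h
    · exact G.adj_symm h
  · intro h
    exact ⟨G.ne_of_adj h, Or.inl h⟩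

lemma er_adj_inl_inr (v : V) (e : G.edgeSet) :
    (ERGraph G).Adj (Sum.inl v) (Sum.inr e) ↔ v ∈ (e : Sym2 V) := by
  rw [ERGraph, boolGraph, SimpleGraph.fromRel_adj]
  simp only [erRel, decide_eq_true_eq, ne_eq]
  constructor
  · rintro ⟨hne, h | h⟩ <;> exact h
  · intro h
    exact ⟨by simp, Or.inl h⟩

lemma er_adj_inr_inr (e e' : G.edgeSet) : ¬ (ERGraph G).Adj (Sum.inr e) (Sum.inr e') := by
  rw [ERGraph, boolGraph, SimpleGraph.fromRel_adj]
  simp [erRel]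

lemma er_nbr_inr (e : G.edgeSet) (u w : V) (he : (e : Sym2 V) = s(u, w)) :
    ((ERGraph G).neighborFinset (Sum.inr e)).val = {Sum.inl u, Sum.inl w} := by
  have hadj : G.Adj u w := G.mem_edgeSet.mp (he ▸ e.2)
  have hne : u ≠ w := G.ne_of_adj hadj
  have hfin : (ERGraph G).neighborFinset (Sum.inr e) = {Sum.inl u, Sum.inl w} := by
    ext x
    cases x with
    | inl y =>
        rw [SimpleGraph.mem_neighborFinset, (ERGraph G).adj_comm, er_adj_inl_inr]
        simp [he, Sym2.mem_iff, eq_comm]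
    | inr f =>
        simp only [SimpleGraph.mem_neighborFinset]
        simp [er_adj_inr_inr]
  rw [hfin]
  rw [Finset.insert_val, Multiset.ndinsert_of_notMem (by simp [hne])]
  rfl

def edgeEmb (v : V) : {w // w ∈ G.neighborFinset v} ↪ (V ⊕ G.edgeSet) where
  toFun w := Sum.inr ⟨s(v, w.1), G.mem_edgeSet.mpr ((G.mem_neighborFinset v w.1).mp w.2)⟩
  inj' := by
    intro a b hab
    simp only [Sum.inr.injEq, Subtype.mk.injEq, Sym2.congr_right] at hab
    exact Subtype.ext hab

lemma er_nbr_inl {β : Type*} (v : V) (φ : (V ⊕ G.edgeSet) → β) (ψ : V → β)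
    (hψ : ∀ w (h : G.Adj v w), ψ w = φ (Sum.inr ⟨s(v, w), G.mem_edgeSet.mpr h⟩)) :
    ((ERGraph G).neighborFinset (Sum.inl v)).val.map φ
      = (G.neighborFinset v).val.map (fun w => φ (Sum.inl w))
        + (G.neighborFinset v).val.map ψ := by
  classical
  have hdisj : Disjoint ((G.neighborFinset v).map ⟨Sum.inl, Sum.inl_injective⟩)
      ((G.neighborFinset v).attach.map (edgeEmb G v)) := by
    simp [Finset.disjoint_left, edgeEmb]
  have hfin : (ERGraph G).neighborFinset (Sum.inl v)
      = ((G.neighborFinset v).map ⟨Sum.inl, Sum.inl_injective⟩).disjUnion _ hdisj := by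
    ext x
    cases x with
    | inl y =>
        simp [SimpleGraph.mem_neighborFinset, er_adj_inl_inl, edgeEmb]
    | inr f =>
        simp only [SimpleGraph.mem_neighborFinset, er_adj_inl_inr, Finset.mem_disjUnion,
          Finset.mem_map, Function.Embedding.coeFn_mk, Finset.mem_attach, true_and,
          Subtype.exists, edgeEmb]
        constructor
        · intro hv
          obtain ⟨y, hy⟩ := Sym2.mem_iff_exists.mp hv
          have hadj : G.Adj v y := G.mem_edgeSet.mp (hy ▸ f.2)
          refine Or.inr ⟨y, hadj, ?_⟩
          exact congrArg Sum.inr (Subtype.ext hy.symm)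
        · rintro (⟨y, _, h⟩ | ⟨y, hy, h⟩)
          · exact absurd h (by simp)
          · have : (⟨s(v, y), _⟩ : G.edgeSet) = f := Sum.inr.inj h
            rw [← this]
            simp
  rw [hfin, show ((Finset.map ⟨Sum.inl, Sum.inl_injective⟩ (G.neighborFinset v)).disjUnion
      (Finset.map (edgeEmb G v) (G.neighborFinset v).attach) hdisj).val = _ + _ from rfl,
    Multiset.map_add]
  congr 1
  · rw [Finset.map_val, Multiset.map_map]; rfl
  · rw [Finset.map_val, Multiset.map_map]
    have h1 : ((G.neighborFinset v).attach.val.map (φ ∘ (edgeEmb G v)))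
        = (G.neighborFinset v).attach.val.map (fun w => ψ w.1) := by
      apply Multiset.map_congr rfl
      intro w _
      exact (hψ w.1 ((G.mem_neighborFinset v w.1).mp w.2)).symm
    rw [h1, Finset.attach_val]
    exact Multiset.attach_map_val' _ ψ

end Aux

def fe {F : Type*} : (t : ℕ) →
    (WLColor F t → WLColor (Option F) t) × (WLColor F t → WLColor F t → WLColor (Option F) t)
  | 0 => (fun x => some x, fun _ _ => (none : Option F))
  | t + 1 =>
    let p := fe t
    (fun x => (p.1 x.1, x.2.map p.1 + x.2.map (p.2 x.1)),
     fun x y => (p.2 x.1 y.1, {p.1 x.1, p.1 y.1}))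

lemma fe_symm : ∀ (t : ℕ) (x y : WLColor F t), (fe t).2 x y = (fe t).2 y x := by
  intro t
  induction t with
  | zero => intro x y; rfl
  | succ t ih =>
      intro x y
      show ((fe t).2 x.1 y.1, _) = ((fe t).2 y.1 x.1, _)
      rw [ih x.1 y.1, Multiset.pair_comm]

section Spec

variable [Fintype V] [DecidableEq V] (G : SimpleGraph V) [DecidableRel G.Adj] (X : V → F)

lemma fe_spec : ∀ t : ℕ,
    (∀ v : V, wl (ERGraph G) (erX G X) t (Sum.inl v) = (fe t).1 (wl G X t v)) ∧
    (∀ (e : G.edgeSet) (u w : V), (e : Sym2 V) = s(u, w) →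
      wl (ERGraph G) (erX G X) t (Sum.inr e) = (fe t).2 (wl G X t u) (wl G X t w)) := by
  intro t
  induction t with
  | zero => exact ⟨fun v => rfl, fun e u w he => rfl⟩
  | succ t ih =>
      obtain ⟨ihA, ihB⟩ := ih
      constructor
      · intro v
        show (wl (ERGraph G) (erX G X) t (Sum.inl v),
            ((ERGraph G).neighborFinset (Sum.inl v)).val.map (wl (ERGraph G) (erX G X) t)) = _
        rw [er_nbr_inl G v (wl (ERGraph G) (erX G X) t)
            (fun w => (fe t).2 (wl G X t v) (wl G X t w))
            (fun w h => (ihB ⟨s(v, w), G.mem_edgeSet.mpr h⟩ v w rfl).symm)]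
        show _ = ((fe t).1 (wl G X t v),
          ((G.neighborFinset v).val.map (wl G X t)).map (fe t).1
            + ((G.neighborFinset v).val.map (wl G X t)).map ((fe t).2 (wl G X t v)))
        rw [ihA v, Multiset.map_map, Multiset.map_map]
        congr 1
        congr 1
        · apply Multiset.map_congr rfl
          intro w _
          exact ihA w
      · intro e u w he
        show (wl (ERGraph G) (erX G X) t (Sum.inr e),
            ((ERGraph G).neighborFinset (Sum.inr e)).val.map (wl (ERGraph G) (erX G X) t)) = _
        rw [er_nbr_inr G e u w he, ihB e u w he]
        show _ = ((fe t).2 (wl G X t u) (wl G X t w),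
          {(fe t).1 (wl G X t u), (fe t).1 (wl G X t w)})
        rw [show Multiset.map (wl (ERGraph G) (erX G X) t) {Sum.inl u, Sum.inl w}
            = {wl (ERGraph G) (erX G X) t (Sum.inl u), wl (ERGraph G) (erX G X) t (Sum.inl w)}
            from rfl, ihA u, ihA w]

end Spec

section Handshake

variable [Fintype V] [DecidableEq V] (G : SimpleGraph V) [DecidableRel G.Adj]

lemma handshake {M : Type*} [AddCommMonoid M] (μ : Sym2 V → M) :
    ∑ v : V, ∑ w ∈ G.neighborFinset v, μ s(v, w) = 2 • ∑ e ∈ G.edgeFinset, μ e := by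
  classical
  have h1 : ∑ v : V, ∑ w ∈ G.neighborFinset v, μ s(v, w) = ∑ d : G.Dart, μ d.edge := by
    rw [Finset.sum_sigma' Finset.univ (fun v => G.neighborFinset v) (fun v w => μ s(v, w))]
    refine Finset.sum_bij'
      (fun p hp => (⟨(p.1, p.2), (G.mem_neighborFinset _ _).mp
        (Finset.mem_sigma.mp hp).2⟩ : G.Dart))
      (fun d _ => ⟨d.fst, d.snd⟩)
      (fun p hp => Finset.mem_univ _)
      (fun d hd => Finset.mem_sigma.mpr ⟨Finset.mem_univ _,
        (G.mem_neighborFinset _ _).mpr d.adj⟩)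
      (fun p hp => rfl) (fun d hd => rfl) (fun p hp => rfl)
  have h2 : ∑ d : G.Dart, μ d.edge = ∑ e ∈ G.edgeFinset, 2 • μ e := by
    rw [← Finset.sum_fiberwise_of_maps_to
      (g := SimpleGraph.Dart.edge) (t := G.edgeFinset)
      (fun d _ => (SimpleGraph.mem_edgeFinset).mpr d.edge_mem)]
    apply Finset.sum_congr rfl
    intro e he
    have hcard : (Finset.univ.filter (fun d : G.Dart => d.edge = e)).card = 2 :=
      G.dart_edge_fiber_card e ((SimpleGraph.mem_edgeFinset).mp he)
    calc ∑ d ∈ Finset.univ.filter (fun d : G.Dart => d.edge = e), μ d.edge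
        = ∑ _d ∈ Finset.univ.filter (fun d : G.Dart => d.edge = e), μ e := by
          apply Finset.sum_congr rfl
          intro d hd
          rw [(Finset.mem_filter.mp hd).2]
      _ = 2 • μ e := by rw [Finset.sum_const, hcard]
  rw [h1, h2, ← Finset.smul_sum]

lemma singleton_sum {α β : Type*} (s : Finset α) (f : α → β) :
    ∑ w ∈ s, ({f w} : Multiset β) = s.val.map f := by
  rw [show (∑ w ∈ s, ({f w} : Multiset β)) = (s.val.map fun w => ({f w} : Multiset β)).sum from rfl,
    show (s.val.map fun w => ({f w} : Multiset β))
      = (s.val.map f).map (fun b => ({b} : Multiset β)) from (Multiset.map_map _ _ _).symm,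
    Multiset.sum_map_singleton]

lemma univ_edge_val :
    ((Finset.univ : Finset G.edgeSet)).val.map Subtype.val = G.edgeFinset.val := by
  have h : (Finset.univ : Finset G.edgeSet).map (Function.Embedding.subtype _) = G.edgeFinset := by
    ext x
    simp [SimpleGraph.mem_edgeFinset]
  rw [← h, Finset.map_val]
  rfl

lemma univ_sum_val :
    (Finset.univ : Finset (V ⊕ G.edgeSet)).val
      = (Finset.univ : Finset V).val.map Sum.inl
        + (Finset.univ : Finset G.edgeSet).val.map Sum.inr := by
  rw [← Finset.univ_disjSum_univ, Finset.val_disjSum]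
  rfl

end Handshake

def wlD {F : Type*} (t : ℕ) : Sym2 (WLColor F t) → WLColor (Option F) t :=
  Sym2.lift ⟨(fe t).2, fun x y => fe_symm t x y⟩

def wlPsi {F : Type*} (t : ℕ) : WLColor F (t + 1) → Multiset (Sym2 (WLColor F t)) :=
  fun x => x.2.map (fun y => s(x.1, y))

section Decomp

variable [Fintype V] [DecidableEq V] (G : SimpleGraph V) [DecidableRel G.Adj] (X : V → F)

def wlP (t : ℕ) : Multiset (Sym2 (WLColor F t)) :=
  G.edgeFinset.val.map (Sym2.map (wl G X t))

lemma wlP_det (t : ℕ) :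
    2 • wlP G X t = ((Finset.univ.val.map (wl G X (t + 1))).map (wlPsi t)).sum := by
  have hR : ((Finset.univ.val.map (wl G X (t + 1))).map (wlPsi t)).sum
      = ∑ v : V, wlPsi t (wl G X (t + 1) v) := by
    rw [Multiset.map_map]
    rfl
  rw [hR]
  have hv : ∀ v : V, wlPsi t (wl G X (t + 1) v)
      = ∑ w ∈ G.neighborFinset v, ({Sym2.map (wl G X t) s(v, w)} : Multiset _) := by
    intro v
    rw [singleton_sum]
    show ((G.neighborFinset v).val.map (wl G X t)).map (fun y => s(wl G X t v, y)) = _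
    rw [Multiset.map_map]
    apply Multiset.map_congr rfl
    intro w _
    rw [Sym2.map_pair_eq]
    rfl
  calc 2 • wlP G X t
      = 2 • ∑ e ∈ G.edgeFinset, ({Sym2.map (wl G X t) e} : Multiset _) := by
        rw [singleton_sum]; rfl
    _ = ∑ v : V, ∑ w ∈ G.neighborFinset v, ({Sym2.map (wl G X t) s(v, w)} : Multiset _) :=
        (handshake G _).symm
    _ = ∑ v : V, wlPsi t (wl G X (t + 1) v) := by
        apply Finset.sum_congr rfl
        intro v _
        exact (hv v).symm

lemma er_decomp (t : ℕ) :
    Finset.univ.val.map (wl (ERGraph G) (erX G X) t)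
      = ((Finset.univ.val.map (wl G X t)).map ((fe t).1)) + (wlP G X t).map (wlD t) := by
  rw [univ_sum_val, Multiset.map_add, Multiset.map_map, Multiset.map_map]
  congr 1
  · rw [Multiset.map_map]
    apply Multiset.map_congr rfl
    intro v _
    exact (fe_spec G X t).1 v
  · rw [wlP, ← univ_edge_val, Multiset.map_map, Multiset.map_map]
    apply Multiset.map_congr rfl
    rintro ⟨e1, he1⟩ _
    induction e1 using Sym2.ind with
    | _ u w =>
      show wl (ERGraph G) (erX G X) t (Sum.inr ⟨s(u, w), he1⟩)
        = wlD t (Sym2.map (wl G X t) s(u, w))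
      rw [(fe_spec G X t).2 ⟨s(u, w), he1⟩ u w rfl, Sym2.map_pair_eq]
      rfl

end Decomp

def ebase {F : Type*} : (t : ℕ) → WLColor F t → F
  | 0, x => x
  | t + 1, x => ebase t x.1

def hrec {F : Type*} (d : F) : (t : ℕ) → WLColor (Option F) t → WLColor F t
  | 0, x => x.getD d
  | t + 1, x => (hrec d t x.1,
      (x.2.filter (fun y => (ebase t y).isSome = true)).map (hrec d t))

section Recover

variable [Fintype V] [DecidableEq V] (G : SimpleGraph V) [DecidableRel G.Adj] (X : V → F)

lemma ebase_wl {W G' : Type*} [Fintype W] (H : SimpleGraph W) [DecidableRel H.Adj] (Y : W → G')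
    (t : ℕ) (v : W) : ebase t (wl H Y t v) = Y v := by
  induction t with
  | zero => rfl
  | succ t ih => exact ih

lemma hrec_spec (d : F) (t : ℕ) (v : V) :
    hrec d t (wl (ERGraph G) (erX G X) t (Sum.inl v)) = wl G X t v := by
  induction t generalizing v with
  | zero => rfl
  | succ t ih =>
      show (hrec d t (wl (ERGraph G) (erX G X) t (Sum.inl v)),
        ((((ERGraph G).neighborFinset (Sum.inl v)).val.map
          (wl (ERGraph G) (erX G X) t)).filter
            (fun y => (ebase t y).isSome = true)).map (hrec d t)) = _
      rw [er_nbr_inl G v (wl (ERGraph G) (erX G X) t)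
          (fun w => if h : G.Adj v w then
              wl (ERGraph G) (erX G X) t (Sum.inr ⟨s(v, w), G.mem_edgeSet.mpr h⟩)
            else wl (ERGraph G) (erX G X) t (Sum.inl v))
          (fun w h => dif_pos h), Multiset.filter_add]
      have hfil1 : ((G.neighborFinset v).val.map
          (fun w => wl (ERGraph G) (erX G X) t (Sum.inl w))).filter
            (fun y => (ebase t y).isSome = true)
          = (G.neighborFinset v).val.map (fun w => wl (ERGraph G) (erX G X) t (Sum.inl w)) := by
        apply Multiset.filter_eq_self.mpr
        intro y hy
        obtain ⟨w, _, rfl⟩ := Multiset.mem_map.mp hy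
        rw [ebase_wl]
        rfl
      have hfil2 : ((G.neighborFinset v).val.map
          (fun w => if h : G.Adj v w then
              wl (ERGraph G) (erX G X) t (Sum.inr ⟨s(v, w), G.mem_edgeSet.mpr h⟩)
            else wl (ERGraph G) (erX G X) t (Sum.inl v))).filter
            (fun y => (ebase t y).isSome = true) = 0 := by
        apply Multiset.filter_eq_nil.mpr
        intro y hy
        obtain ⟨w, hw, rfl⟩ := Multiset.mem_map.mp hy
        rw [dif_pos ((G.mem_neighborFinset v w).mp hw), ebase_wl]
        simp [erX]
      rw [hfil1, hfil2, add_zero, Multiset.map_map]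
      show (_, _) = (wl G X t v, (G.neighborFinset v).val.map (wl G X t))
      rw [ih v]
      congr 1
      apply Multiset.map_congr rfl
      intro w _
      exact ih w

lemma wl_recover (d : F) (t : ℕ) :
    Finset.univ.val.map (wl G X t)
      = ((Finset.univ.val.map (wl (ERGraph G) (erX G X) t)).filter
          (fun y => (ebase t y).isSome = true)).map (hrec d t) := by
  rw [univ_sum_val, Multiset.map_add, Multiset.map_map, Multiset.map_map, Multiset.filter_add]
  simp only [Function.comp_def]
  have hfil1 : ((Finset.univ : Finset V).val.map
      (fun v => wl (ERGraph G) (erX G X) t (Sum.inl v))).filter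
        (fun y => (ebase t y).isSome = true)
      = (Finset.univ : Finset V).val.map (fun v => wl (ERGraph G) (erX G X) t (Sum.inl v)) := by
    apply Multiset.filter_eq_self.mpr
    intro y hy
    obtain ⟨w, _, rfl⟩ := Multiset.mem_map.mp hy
    rw [ebase_wl]
    rfl
  have hfil2 : ((Finset.univ : Finset G.edgeSet).val.map
      (fun e => wl (ERGraph G) (erX G X) t (Sum.inr e))).filter
        (fun y => (ebase t y).isSome = true) = 0 := by
    apply Multiset.filter_eq_nil.mpr
    intro y hy
    obtain ⟨e, _, rfl⟩ := Multiset.mem_map.mp hy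
    rw [ebase_wl]
    simp [erX]
  rw [hfil1, hfil2, add_zero, Multiset.map_map]
  apply Multiset.map_congr rfl
  intro v _
  exact (hrec_spec G X d t v).symm

end Recover

lemma wlP_eq_of_wl_eq {V₁ V₂ : Type*} [Fintype V₁] [DecidableEq V₁]
    [Fintype V₂] [DecidableEq V₂]
    (G₁ : SimpleGraph V₁) [DecidableRel G₁.Adj] (X₁ : V₁ → F)
    (G₂ : SimpleGraph V₂) [DecidableRel G₂.Adj] (X₂ : V₂ → F) (t : ℕ)
    (h : (Finset.univ.val.map (wl G₁ X₁ (t + 1))) = (Finset.univ.val.map (wl G₂ X₂ (t + 1)))) :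
    wlP G₁ X₁ t = wlP G₂ X₂ t := by
  classical
  have h2 : 2 • wlP G₁ X₁ t = 2 • wlP G₂ X₂ t := by
    rw [wlP_det, wlP_det, h]
  ext a
  have := congrArg (Multiset.count a) h2
  rw [Multiset.count_nsmul, Multiset.count_nsmul] at this
  omega


/-- ER-WL is exactly as powerful as WL: for any two graphs, the WL test distinguishes them
(the multisets of colors differ at some iteration) if and only if WL run on the
edge-representation augmented graphs distinguishes them. -/
theorem erwl_as_powerful_as_wl {V₁ V₂ : Type*} [Fintype V₁] [DecidableEq V₁]
    [Fintype V₂] [DecidableEq V₂]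
    (G₁ : SimpleGraph V₁) [DecidableRel G₁.Adj] (X₁ : V₁ → F)
    (G₂ : SimpleGraph V₂) [DecidableRel G₂.Adj] (X₂ : V₂ → F) :
    (∃ t : ℕ, (Finset.univ.val.map (wl G₁ X₁ t)) ≠ (Finset.univ.val.map (wl G₂ X₂ t))) ↔
    (∃ t : ℕ, (Finset.univ.val.map (wl (ERGraph G₁) (erX G₁ X₁) t)) ≠
        (Finset.univ.val.map (wl (ERGraph G₂) (erX G₂ X₂) t))) := by
  rw [← not_iff_not]
  push_neg
  constructor
  · -- WL multisets agree at every iteration ⇒ ER-WL multisets agree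
    intro hWL t
    rw [er_decomp, er_decomp, hWL t, wlP_eq_of_wl_eq G₁ X₁ G₂ X₂ t (hWL (t + 1))]
  · -- ER-WL multisets agree at every iteration ⇒ WL multisets agree
    intro hER t
    rcases isEmpty_or_nonempty F with hF | hF
    · haveI : IsEmpty V₁ := Function.isEmpty X₁
      haveI : IsEmpty V₂ := Function.isEmpty X₂
      rw [Finset.univ_eq_empty (α := V₁), Finset.univ_eq_empty (α := V₂)]
      rfl
    · obtain ⟨d⟩ := hF
      rw [wl_recover G₁ X₁ d t, wl_recover G₂ X₂ d t, hER t]
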